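/- Let B be a uniformly random sequence in {+1, −1}^w and for k > 0 let E^L_k be the event that some prefix sum of B is at most −k. If a < b are two integers such that the events {χ(B) = a} and {χ(B) = b} both have positive probability, then Pr(E^L_k | χ(B) = a) ≥ Pr(E^L_k | χ(B) = b). -/

import Mathlib

open MeasureTheory ProbabilityTheory
open scoped ENNReal NNReal

namespace Schelling

/-- Labels: `true` = type `x`, `false` = type `o`.
A configuration on the ring of `n` nodes assigns a label to each node. -/
abbrev Config (n : ℕ) := ZMod n → Bool

/-- The ±1 value of a label: `x ↦ +1`, `o ↦ -1`. -/
def xval (b : Bool) : ℤ := if b then 1 else -1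

/-- A node `i` is happy (tolerance τ = 1/2) if at least `w` of its `2w` nearest
neighbours `i ± 1, …, i ± w` carry the same label as `i`. -/
def happy (w : ℕ) {n : ℕ} (c : Config n) (i : ZMod n) : Prop :=
  w ≤ ∑ k ∈ Finset.Icc 1 w,
      ((if c (i + (k : ZMod n)) = c i then 1 else 0) +
       (if c (i - (k : ZMod n)) = c i then 1 else 0))

instance (w : ℕ) {n : ℕ} (c : Config n) (i : ZMod n) : Decidable (happy w c i) :=
  Nat.decLe _ _

/-- The result of exchanging the labels of nodes `i` and `j`. -/
def doSwap {n : ℕ} (c : Config n) (i j : ZMod n) : Config n :=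
  Function.update (Function.update c i (c j)) j (c i)

/-- One step of the dynamics: the proposed pair `p` swaps labels iff both nodes are
unhappy and carry opposite labels. -/
def swapStep (w : ℕ) {n : ℕ} (c : Config n) (p : ZMod n × ZMod n) : Config n :=
  if ¬ happy w c p.1 ∧ ¬ happy w c p.2 ∧ c p.1 ≠ c p.2 then doSwap c p.1 p.2 else c

/-- The trajectory of the segregation process started from `c0`, where `pr t` is the
pair of nodes proposed for a swap at time `t`. -/
def traj (w : ℕ) {n : ℕ} (c0 : Config n) (pr : ℕ → ZMod n × ZMod n) : ℕ → Config n
  | 0 => c0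
  | t + 1 => swapStep w (traj w c0 pr t) (pr t)

/-- A configuration is frozen if it contains no pair of unhappy, oppositely labeled
nodes, so that no further swaps are possible. -/
def Frozen (w : ℕ) {n : ℕ} (c : Config n) : Prop :=
  ∀ i j : ZMod n, ¬(¬ happy w c i ∧ ¬ happy w c j ∧ c i ≠ c j)

/-- `c'` is obtained from `c` by one legal swap: two distinct unhappy, oppositely
labeled nodes exchange labels. -/
def LegalSwap (w : ℕ) {n : ℕ} (c c' : Config n) : Prop :=
  ∃ i j : ZMod n, i ≠ j ∧ ¬ happy w c i ∧ ¬ happy w c j ∧ c i ≠ c j ∧ c' = doSwap c i j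

/-- The block of `len` consecutive nodes starting at `s` is monochromatic. -/
def MonochromaticBlock {n : ℕ} (c : Config n) (s : ZMod n) (len : ℕ) : Prop :=
  ∀ k < len, c (s + (k : ZMod n)) = c s

/-- A firewall is a monochromatic block of at least `w + 1` consecutive nodes. -/
def HasFirewall (w : ℕ) {n : ℕ} (c : Config n) : Prop :=
  ∃ (s : ZMod n) (len : ℕ), w + 1 ≤ len ∧ MonochromaticBlock c s len

/-- Node `i` belongs to some firewall of `c`. -/
def InFirewall (w : ℕ) {n : ℕ} (c : Config n) (i : ZMod n) : Prop :=
  ∃ (s : ZMod n) (len : ℕ), w + 1 ≤ len ∧ MonochromaticBlock c s len ∧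
    ∃ k < len, i = s + (k : ZMod n)

instance (n : ℕ) : MeasurableSpace (ZMod n) := ⊤

/-- The uniform probability measure on a finite set `s`. -/
noncomputable def uniformOn {α : Type*} [MeasurableSpace α] (s : Finset α) : Measure α :=
  (s.card : ℝ≥0∞)⁻¹ • ∑ a ∈ s, Measure.dirac a

/-- Unordered proposals are modeled as ordered pairs of distinct nodes. -/
def distinctPairs (n : ℕ) [NeZero n] : Finset (ZMod n × ZMod n) :=
  Finset.univ.filter fun p => p.1 ≠ p.2

/-- The uniform distribution of the initial configuration. -/
noncomputable def configMeasure (n : ℕ) [NeZero n] : Measure (Config n) :=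
  uniformOn (Finset.univ : Finset (Config n))

/-- The uniform distribution of a proposed pair. -/
noncomputable def pairMeasure (n : ℕ) [NeZero n] : Measure (ZMod n × ZMod n) :=
  uniformOn (distinctPairs n)

/-- `(init, prop)` is a realization of the segregation process randomness: for every
finite horizon `T`, the initial configuration together with the first `T` proposals is
distributed as (uniform configuration) × (i.i.d. uniform distinct pairs). -/
def IsSchellingProcess (n : ℕ) [NeZero n] {Ω : Type*} [MeasurableSpace Ω]
    (μ : Measure Ω) (init : Ω → Config n) (prop : ℕ → Ω → ZMod n × ZMod n) : Prop :=
  ∀ T : ℕ, Measure.map (fun ω => (init ω, fun t : Fin T => prop t ω)) μ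
      = (configMeasure n).prod (Measure.pi fun _ : Fin T => pairMeasure n)

/-- The x-bias of node `i`: the sum of the ±1 values over the window `i - w, …, i + w`. -/
def bias (w : ℕ) {n : ℕ} (c : Config n) (i : ZMod n) : ℤ :=
  xval (c i) + ∑ k ∈ Finset.Icc 1 w,
    (xval (c (i + (k : ZMod n))) + xval (c (i - (k : ZMod n))))

/-- An x-firewall incubator: a block `F` of `len` consecutive nodes starting at `s`,
made of a left defender (first `w+1` nodes), an internal block, and a right defender
(last `w+1` nodes), such that every node of `F` has x-bias `> √w`, the minimum bias on
the left defender is attained at its left endpoint, and the minimum bias on the right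
defender is attained at its right endpoint. -/
def IsIncubator (w : ℕ) {n : ℕ} (c : Config n) (s : ZMod n) (len : ℕ) : Prop :=
  2 * (w + 1) ≤ len ∧
  (∀ k < len, Real.sqrt w < ((bias w c (s + (k : ZMod n)) : ℤ) : ℝ)) ∧
  (∀ k < w + 1, bias w c s ≤ bias w c (s + (k : ZMod n))) ∧
  (∀ k < w + 1,
    bias w c (s + ((len - 1 : ℕ) : ZMod n)) ≤ bias w c (s + ((len - 1 - k : ℕ) : ZMod n)))

/-- The sum of the first `j` entries of a ±1 sequence. -/
def chiPrefix {m : ℕ} (B : Fin m → Bool) (j : ℕ) : ℤ :=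
  ∑ i : Fin m, if (i : ℕ) < j then xval (B i) else 0

/-- The total sum of a ±1 sequence. -/
def chi {m : ℕ} (B : Fin m → Bool) : ℤ := ∑ i : Fin m, xval (B i)

/-- The sum of the last `j` entries of a ±1 sequence. -/
def chiSuffix {m : ℕ} (B : Fin m → Bool) (j : ℕ) : ℤ :=
  ∑ i : Fin m, if m - j ≤ (i : ℕ) then xval (B i) else 0

/-- A sequence `B ∈ {±1}^w` is x-promoting if `χ(B) ≥ 5√w` and for all `1 ≤ j ≤ w`,
`χ_j(B) > -2√w` and `χ_{-j}(B) > -2√w`. -/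
def XPromoting (w : ℕ) (B : Fin w → Bool) : Prop :=
  5 * Real.sqrt w ≤ ((chi B : ℤ) : ℝ) ∧
  ∀ j : ℕ, 1 ≤ j → j ≤ w →
    (-2) * Real.sqrt w < ((chiPrefix B j : ℤ) : ℝ) ∧
    (-2) * Real.sqrt w < ((chiSuffix B j : ℤ) : ℝ)

/-- The concatenation of the three length-`w` sequences `B, B', B''`, as a function on
positions `0, …, 3w - 1`. -/
def concat3 (w : ℕ) (B B' B'' : Fin w → Bool) (i : ℕ) : Bool :=
  if h : i < w then B ⟨i, h⟩
  else if h' : i < 2 * w then B' ⟨i - w, by omega⟩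
  else if h'' : i < 3 * w then B'' ⟨i - 2 * w, by omega⟩
  else false

/-- The sign sequences of length `a + b` containing exactly `a` entries `+1`
(i.e. `true`) and `b` entries `-1` (i.e. `false`). -/
def ballotSeqs (a b : ℕ) : Finset (Fin (a + b) → Bool) :=
  Finset.univ.filter fun f => (Finset.univ.filter fun i => f i = true).card = a

/-- Node `i` is, at time `t`, selected to participate in a proposed swap together with
an unhappy, oppositely labeled node. -/
def selectedWith (w : ℕ) {n : ℕ} (c0 : Config n) (pr : ℕ → ZMod n × ZMod n)
    (i : ZMod n) (t : ℕ) : Prop :=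
  ((pr t).1 = i ∧ ¬ happy w (traj w c0 pr t) (pr t).2 ∧
      traj w c0 pr t (pr t).2 ≠ traj w c0 pr t i) ∨
  ((pr t).2 = i ∧ ¬ happy w (traj w c0 pr t) (pr t).1 ∧
      traj w c0 pr t (pr t).1 ≠ traj w c0 pr t i)

/-- The satisfaction time of node `i`: the first time at which `i` is selected in a
proposed swap together with an unhappy, oppositely labeled node (`∞` if never). -/
noncomputable def satTime (w : ℕ) {n : ℕ} (c0 : Config n) (pr : ℕ → ZMod n × ZMod n)
    (i : ZMod n) : ℕ∞ :=
  sInf {t : ℕ∞ | ∃ t' : ℕ, t = (t' : ℕ∞) ∧ selectedWith w c0 pr i t'}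

/-- Node `i` is impatient at time `t` if it is unhappy at time `t` and `t ≤ t*_i`. -/
def Impatient (w : ℕ) {n : ℕ} (c0 : Config n) (pr : ℕ → ZMod n × ZMod n)
    (i : ZMod n) (t : ℕ) : Prop :=
  ¬ happy w (traj w c0 pr t) i ∧ (t : ℕ∞) ≤ satTime w c0 pr i

/-- The left combatants of the block starting at `s`: the nodes of the left attacker
`A_L = {s - w, …, s - 1}` initially labeled `x`, together with the nodes of the left
defender `D_L = {s, …, s + w}` initially labeled `o`. -/
def leftCombatants (w : ℕ) {n : ℕ} [NeZero n] (c0 : Config n) (s : ZMod n) :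
    Finset (ZMod n) :=
  ((Finset.Icc 1 w).image fun k : ℕ => s - (k : ZMod n)).filter (fun i => c0 i = true) ∪
  ((Finset.range (w + 1)).image fun k : ℕ => s + (k : ZMod n)).filter (fun i => c0 i = false)

/-- The right combatants of the block of length `len` starting at `s`: the nodes of the
right attacker `A_R = {s + len, …, s + len + w - 1}` initially labeled `x`, together
with the nodes of the right defender `D_R = {s + len - 1 - w, …, s + len - 1}` initially
labeled `o`. -/
def rightCombatants (w : ℕ) {n : ℕ} [NeZero n] (c0 : Config n) (s : ZMod n) (len : ℕ) :
    Finset (ZMod n) :=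
  ((Finset.range w).image fun k : ℕ => s + ((len + k : ℕ) : ZMod n)).filter
      (fun i => c0 i = true) ∪
  ((Finset.range (w + 1)).image fun k : ℕ => s + ((len - 1 - k : ℕ) : ZMod n)).filter
      (fun i => c0 i = false)

/-- `l` is a pseudo-transcript of the combatant set `C` relative to time `t0`: it
enumerates `C` without repetitions, all combatants with satisfaction time `> t0` come
first (in an arbitrary order, corresponding to an arbitrary permutation of their
signs), and the remaining combatants are listed in decreasing order of satisfaction
time. -/
def IsPseudoTranscript (w : ℕ) {n : ℕ} (c0 : Config n) (pr : ℕ → ZMod n × ZMod n)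
    (t0 : ℕ) (C : Finset (ZMod n)) (l : List (ZMod n)) : Prop :=
  l.Nodup ∧ l.toFinset = C ∧
  ∀ p q : Fin l.length, (p : ℕ) < (q : ℕ) →
    ((t0 : ℕ∞) < satTime w c0 pr (l.get q) → (t0 : ℕ∞) < satTime w c0 pr (l.get p)) ∧
    (satTime w c0 pr (l.get q) ≤ (t0 : ℕ∞) → satTime w c0 pr (l.get p) ≤ (t0 : ℕ∞) →
      satTime w c0 pr (l.get q) ≤ satTime w c0 pr (l.get p))

/-- All partial sums of the sign sequence associated to the list `l` (where each node
contributes the ±1 value of its initial label) are nonnegative. -/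
def NonnegPartialSums {n : ℕ} (c0 : Config n) (l : List (ZMod n)) : Prop :=
  ∀ m ≤ l.length, 0 ≤ ((l.take m).map fun i => xval (c0 i)).sum

/-- Nodes `i` and `j` belong to the same monochromatic run of `c`. -/
def sameRun {n : ℕ} (c : Config n) (i j : ZMod n) : Prop :=
  ∃ k : ℕ, ((j = i + (k : ZMod n)) ∧ ∀ m ≤ k, c (i + (m : ZMod n)) = c i) ∨
           ((j = i - (k : ZMod n)) ∧ ∀ m ≤ k, c (i - (m : ZMod n)) = c i)

/-- The length of the monochromatic run of `c` containing node `i`. -/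
noncomputable def runLength {n : ℕ} (c : Config n) (i : ZMod n) : ℕ :=
  Nat.card {j : ZMod n // sameRun c i j}

/-- The number of unhappy nodes with label `b`. -/
noncomputable def unhappyCount (w : ℕ) {n : ℕ} (c : Config n) (b : Bool) : ℕ :=
  Nat.card {i : ZMod n // c i = b ∧ ¬ happy w c i}

/-- The number of impatient nodes at time `t`. -/
noncomputable def impatientCount (w : ℕ) {n : ℕ} (c0 : Config n)
    (pr : ℕ → ZMod n × ZMod n) (t : ℕ) : ℕ :=
  Nat.card {i : ZMod n // Impatient w c0 pr i t}

/-- The absolute difference between the numbers of unhappy `x`'s and unhappy `o`'s. -/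
noncomputable def unhappyImbalance (w : ℕ) {n : ℕ} (c : Config n) : ℝ :=
  |(unhappyCount w c true : ℝ) - (unhappyCount w c false : ℝ)|

/-- The earliest time at which fewer than `bound` nodes are impatient (`∞` if never). -/
noncomputable def firstFewImpatient (w : ℕ) {n : ℕ} (c0 : Config n)
    (pr : ℕ → ZMod n × ZMod n) (bound : ℝ) : ℕ∞ :=
  sInf {t : ℕ∞ | ∃ t' : ℕ, t = (t' : ℕ∞) ∧ (impatientCount w c0 pr t' : ℝ) < bound}

/-- The earliest time at which the numbers of unhappy `x`'s and unhappy `o`'s differ by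
more than `bound` (`∞` if never). -/
noncomputable def firstImbalance (w : ℕ) {n : ℕ} (c0 : Config n)
    (pr : ℕ → ZMod n × ZMod n) (bound : ℝ) : ℕ∞ :=
  sInf {t : ℕ∞ | ∃ t' : ℕ, t = (t' : ℕ∞) ∧ bound < unhappyImbalance w (traj w c0 pr t')}

/-- In the disjoint-cycles graph `G` (cycles of length `L`), the node reached from `i`
by moving `k` steps forward inside `i`'s cycle. -/
def gnbr (L : ℕ) {n : ℕ} (i : ZMod n) (k : ℕ) : ZMod n :=
  (((i.val / L) * L + ((i.val % L + k) % L) : ℕ) : ZMod n)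

/-- Happiness with respect to the disjoint-cycles graph `G`. -/
def ghappy (w L : ℕ) {n : ℕ} (c : Config n) (i : ZMod n) : Prop :=
  w ≤ ∑ k ∈ Finset.Icc 1 w,
      ((if c (gnbr L i k) = c i then 1 else 0) +
       (if c (gnbr L i (L - k)) = c i then 1 else 0))

instance (w L : ℕ) {n : ℕ} (c : Config n) (i : ZMod n) : Decidable (ghappy w L c i) :=
  Nat.decLe _ _

/-- One step of the segregation dynamics on the disjoint-cycles graph `G`. -/
def gswapStep (w L : ℕ) {n : ℕ} (c : Config n) (p : ZMod n × ZMod n) : Config n :=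
  if ¬ ghappy w L c p.1 ∧ ¬ ghappy w L c p.2 ∧ c p.1 ≠ c p.2 then doSwap c p.1 p.2 else c

/-- The trajectory of the process on `G`, coupled with the ring process by using the
same initial configuration and the same proposed pairs. -/
def gtraj (w L : ℕ) {n : ℕ} (c0 : Config n) (pr : ℕ → ZMod n × ZMod n) : ℕ → Config n
  | 0 => c0
  | t + 1 => gswapStep w L (gtraj w L c0 pr t) (pr t)

/-- The set of nodes within `w` steps of `i` in either graph (including `i`). -/
def nbhd (w L : ℕ) {n : ℕ} (i : ZMod n) : Set (ZMod n) :=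
  {j | ∃ k ≤ w, j = i + (k : ZMod n) ∨ j = i - (k : ZMod n) ∨
        j = gnbr L i k ∨ j = gnbr L i (L - k)}

open Classical in
/-- The tainted set `D(t)`: initially the nodes whose residue mod `L` lies in
`{-w+1, …, w-1}`; whenever a proposed pair touches a tainted node, all nodes within `w`
steps (in either graph) of either member of the pair become tainted. -/
noncomputable def tainted (w L : ℕ) {n : ℕ} (pr : ℕ → ZMod n × ZMod n) :
    ℕ → Set (ZMod n)
  | 0 => {i | i.val % L < w ∨ L - w < i.val % L}
  | t + 1 =>
      if (pr t).1 ∈ tainted w L pr t ∨ (pr t).2 ∈ tainted w L pr t then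
        tainted w L pr t ∪ nbhd w L (pr t).1 ∪ nbhd w L (pr t).2
      else tainted w L pr t

section Statement6Aux

open Finset

variable {w k : ℕ}

def trues {w : ℕ} (B : Fin w → Bool) : ℕ := (univ.filter fun i => B i = true).card

lemma trues_le {w : ℕ} (B : Fin w → Bool) : trues B ≤ w := by
  classical
  simpa [trues] using (Finset.card_filter_le univ fun i => B i = true)

lemma chi_eq_trues {w : ℕ} (B : Fin w → Bool) : chi B = 2 * (trues B : ℤ) - w := by
  classical
  have h : ∀ i : Fin w, xval (B i) = 2 * (if B i = true then (1:ℤ) else 0) - 1 := by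
    intro i; cases hB : B i <;> simp [xval]
  unfold chi trues
  rw [Finset.sum_congr rfl fun i _ => h i, Finset.sum_sub_distrib, ← Finset.mul_sum,
    Finset.sum_boole, Finset.sum_const]
  simp

lemma chiPrefix_zero {w : ℕ} (B : Fin w → Bool) : chiPrefix B 0 = 0 := by simp [chiPrefix]

lemma chiPrefix_succ {w : ℕ} (B : Fin w → Bool) (j : ℕ) :
    chiPrefix B (j + 1) = chiPrefix B j + (if h : j < w then xval (B ⟨j, h⟩) else 0) := by
  classical
  have h : ∀ i : Fin w, (if (i : ℕ) < j + 1 then xval (B i) else 0)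
      = (if (i : ℕ) < j then xval (B i) else 0) + (if (i : ℕ) = j then xval (B i) else 0) := by
    intro i
    rcases lt_trichotomy (i : ℕ) j with h | h | h
    · simp [h, Nat.lt_succ_of_lt h, Nat.ne_of_lt h]
    · simp [h]
    · rw [if_neg (by omega), if_neg (by omega), if_neg (by omega)]; ring
  unfold chiPrefix
  rw [Finset.sum_congr rfl fun i _ => h i, Finset.sum_add_distrib]
  congr 1
  by_cases hw : j < w
  · rw [dif_pos hw]
    rw [Finset.sum_congr rfl (g := fun i => if i = (⟨j, hw⟩ : Fin w) then xval (B i) else 0)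
      (fun i _ => by simp [Fin.ext_iff])]
    simp
  · rw [dif_neg hw]
    apply Finset.sum_eq_zero
    intro i _
    rw [if_neg]
    intro hij
    exact hw (hij ▸ i.isLt)

lemma chiPrefix_of_ge {w : ℕ} (B : Fin w → Bool) {j : ℕ} (h : w ≤ j) :
    chiPrefix B j = chi B := by
  unfold chiPrefix chi
  exact Finset.sum_congr rfl fun i _ => if_pos (lt_of_lt_of_le i.isLt h)

lemma chiPrefix_lower {w : ℕ} (B : Fin w → Bool) (j : ℕ) :
    (trues B : ℤ) - w ≤ chiPrefix B j := by
  classical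
  have h1 : ∀ i : Fin w, (if B i = false then (-1 : ℤ) else 0)
      ≤ (if (i : ℕ) < j then xval (B i) else 0) := by
    intro i
    cases hB : B i <;> by_cases hij : (i:ℕ) < j <;> simp [hij, xval]
  have h2 : (∑ i : Fin w, if B i = false then (-1 : ℤ) else 0) ≤ chiPrefix B j :=
    Finset.sum_le_sum fun i _ => h1 i
  have h3 : (∑ i : Fin w, if B i = false then (-1 : ℤ) else 0)
      = -((univ.filter fun i => B i = false).card : ℤ) := by
    rw [← Finset.sum_boole]
    rw [← Finset.sum_neg_distrib]
    exact Finset.sum_congr rfl fun i _ => by by_cases h : B i = false <;> simp [h]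
  have h4 : (univ.filter fun i => B i = false).card = w - trues B := by
    have := Finset.card_filter_add_card_filter_not (s := (univ : Finset (Fin w)))
      (p := fun i => B i = true)
    simp only [Finset.card_univ, Fintype.card_fin] at this
    have he : (univ.filter fun i => ¬ B i = true).card
        = (univ.filter fun i => B i = false).card := by
      congr 1
      apply Finset.filter_congr
      intro i _
      simp
    unfold trues
    omega
  rw [h3] at h2
  have h5 := trues_le B
  omega


def Hits (k : ℕ) {w : ℕ} (B : Fin w → Bool) : Prop := ∃ j : ℕ, chiPrefix B j ≤ -(k : ℤ)

variable {w k : ℕ}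

lemma hits_of_chi_le {B : Fin w → Bool} (h : chi B ≤ -(k:ℤ)) : Hits k B :=
  ⟨w, by rwa [chiPrefix_of_ge B le_rfl]⟩

lemma not_hits {B : Fin w → Bool} (hk : 0 < k) (h : w < trues B + k) : ¬ Hits k B := by
  rintro ⟨j, hj⟩
  have := chiPrefix_lower B j
  have := trues_le B
  omega

noncomputable instance (B : Fin w → Bool) : DecidablePred fun j : ℕ => chiPrefix B j ≤ -(k:ℤ) :=
  fun _ => Int.decLe _ _

lemma find_pos (hk : 0 < k) {B : Fin w → Bool} (hB : Hits k B) : 0 < Nat.find hB := by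
  rcases Nat.eq_zero_or_pos (Nat.find hB) with h | h
  · have := Nat.find_spec hB
    rw [h, chiPrefix_zero] at this
    omega
  · exact h

lemma find_le_w {B : Fin w → Bool} (hB : Hits k B) : Nat.find hB ≤ w := by
  obtain ⟨j, hj⟩ := hB
  have hm : chiPrefix B (min j w) ≤ -(k:ℤ) := by
    rcases le_total j w with h | h
    · rwa [min_eq_left h]
    · rw [min_eq_right h, chiPrefix_of_ge B le_rfl, ← chiPrefix_of_ge B h]
      exact hj
  exact le_trans (Nat.find_le hm) (min_le_right j w)

lemma chiPrefix_find (hk : 0 < k) {B : Fin w → Bool} (hB : Hits k B) :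
    chiPrefix B (Nat.find hB) = -(k:ℤ) := by
  have h1 := Nat.find_spec hB
  have hp := find_pos hk hB
  have h2 : ¬ chiPrefix B (Nat.find hB - 1) ≤ -(k:ℤ) := Nat.find_min hB (by omega)
  have h3 := chiPrefix_succ B (Nat.find hB - 1)
  rw [Nat.sub_add_cancel hp] at h3
  have h4 : (-1 : ℤ) ≤ (if h : Nat.find hB - 1 < w then xval (B ⟨Nat.find hB - 1, h⟩) else 0) := by
    split
    · cases B _ <;> simp [xval]
    · norm_num
  omega

noncomputable def reflect {B : Fin w → Bool} (hB : Hits k B) : Fin w → Bool :=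
  fun i => if (i : ℕ) < Nat.find hB then B i else !(B i)

lemma chiPrefix_reflect_le {B : Fin w → Bool} (hB : Hits k B) {j : ℕ}
    (hj : j ≤ Nat.find hB) : chiPrefix (reflect hB) j = chiPrefix B j := by
  unfold chiPrefix
  refine Finset.sum_congr rfl fun i _ => ?_
  by_cases h : (i : ℕ) < j
  · rw [if_pos h, if_pos h]
    unfold reflect
    rw [if_pos (lt_of_lt_of_le h hj)]
  · rw [if_neg h, if_neg h]

lemma chiPrefix_reflect_ge {B : Fin w → Bool} (hB : Hits k B) {j : ℕ}
    (hj : Nat.find hB ≤ j) :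
    chiPrefix (reflect hB) j + chiPrefix B j = 2 * chiPrefix B (Nat.find hB) := by
  have hterm : ∀ i : Fin w,
      ((if (i : ℕ) < j then xval (reflect hB i) else 0) +
        if (i : ℕ) < j then xval (B i) else 0)
      = 2 * (if (i : ℕ) < Nat.find hB then xval (B i) else 0) := by
    intro i
    by_cases h1 : (i : ℕ) < Nat.find hB
    · rw [if_pos h1, if_pos (lt_of_lt_of_le h1 hj), if_pos (lt_of_lt_of_le h1 hj)]
      unfold reflect
      rw [if_pos h1]
      ring
    · rw [if_neg h1, mul_zero]
      by_cases h2 : (i : ℕ) < j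
      · rw [if_pos h2, if_pos h2]
        unfold reflect
        rw [if_neg h1]
        cases B i <;> simp [xval]
      · rw [if_neg h2, if_neg h2]
        ring
  unfold chiPrefix
  rw [← Finset.sum_add_distrib, Finset.sum_congr rfl fun i _ => hterm i, ← Finset.mul_sum]
  rfl

lemma chi_reflect (hk : 0 < k) {B : Fin w → Bool} (hB : Hits k B) :
    chi (reflect hB) = -2 * k - chi B := by
  have h := chiPrefix_reflect_ge hB (find_le_w hB)
  rw [chiPrefix_of_ge _ le_rfl, chiPrefix_of_ge _ le_rfl, chiPrefix_find hk hB] at h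
  omega

lemma reflect_hits (hk : 0 < k) {B : Fin w → Bool} (hB : Hits k B) : Hits k (reflect hB) :=
  ⟨Nat.find hB, by rw [chiPrefix_reflect_le hB le_rfl, chiPrefix_find hk hB]⟩

lemma find_reflect (hk : 0 < k) {B : Fin w → Bool} (hB : Hits k B) :
    Nat.find (reflect_hits hk hB) = Nat.find hB := by
  apply le_antisymm
  · exact Nat.find_le (by rw [chiPrefix_reflect_le hB le_rfl, chiPrefix_find hk hB])
  · by_contra h
    push_neg at h
    have h2 := Nat.find_spec (reflect_hits hk hB)
    rw [chiPrefix_reflect_le hB (le_of_lt h)] at h2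
    exact Nat.find_min hB h h2

lemma reflect_reflect (hk : 0 < k) {B : Fin w → Bool} (hB : Hits k B) :
    reflect (reflect_hits hk hB) = B := by
  funext i
  unfold reflect
  erw [find_reflect hk hB]
  by_cases h : (i : ℕ) < Nat.find hB <;> simp [h, reflect]


open Classical in
noncomputable def reflectF (k : ℕ) {w : ℕ} (B : Fin w → Bool) : Fin w → Bool :=
  if hB : Hits k B then reflect (k := k) hB else B

lemma reflectF_hits (hk : 0 < k) {B : Fin w → Bool} (hB : Hits k B) :
    Hits k (reflectF k B) := by
  unfold reflectF
  rw [dif_pos hB]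
  exact reflect_hits hk hB

lemma chi_reflectF (hk : 0 < k) {B : Fin w → Bool} (hB : Hits k B) :
    chi (reflectF k B) = -2 * k - chi B := by
  unfold reflectF
  rw [dif_pos hB]
  exact chi_reflect hk hB

lemma reflectF_invol (hk : 0 < k) {B : Fin w → Bool} (hB : Hits k B) :
    reflectF k (reflectF k B) = B := by
  unfold reflectF
  rw [dif_pos hB, dif_pos (reflect_hits hk hB)]
  exact reflect_reflect hk hB

open Classical in
noncomputable def Fs (w t : ℕ) : Finset (Fin w → Bool) := univ.filter fun B => trues B = t

open Classical in
noncomputable def FH (w k t : ℕ) : Finset (Fin w → Bool) :=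
  univ.filter fun B => trues B = t ∧ Hits k B

lemma card_Fs (w t : ℕ) : (Fs w t).card = w.choose t := by
  classical
  have hpc := Finset.card_powersetCard t (univ : Finset (Fin w))
  rw [Finset.card_univ, Fintype.card_fin] at hpc
  rw [← hpc]
  apply Finset.card_bij (fun B _ => univ.filter fun i => B i = true)
  · intro B hB
    rw [Finset.mem_powersetCard]
    exact ⟨Finset.subset_univ _, (Finset.mem_filter.mp hB).2⟩
  · intro B₁ _ B₂ _ h
    funext i
    have hi := Finset.ext_iff.mp h i
    simp only [Finset.mem_filter, Finset.mem_univ, true_and] at hi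
    cases h1 : B₁ i <;> cases h2 : B₂ i <;> simp [h1, h2] at hi ⊢
  · intro s hs
    rw [Finset.mem_powersetCard] at hs
    refine ⟨fun i => decide (i ∈ s), Finset.mem_filter.mpr ⟨Finset.mem_univ _, ?_⟩, ?_⟩
    · unfold trues
      rw [← hs.2]
      congr 1
      ext i
      simp
    · ext i
      simp

lemma FH_eq_Fs {t : ℕ} (hle : 2 * t + k ≤ w) : FH w k t = Fs w t := by
  classical
  unfold FH Fs
  apply Finset.filter_congr
  intro B _
  simp only [and_iff_left_iff_imp]
  intro ht
  apply hits_of_chi_le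
  rw [chi_eq_trues, ht]
  push_cast
  omega

lemma FH_empty {t : ℕ} (hk : 0 < k) (h : w < t + k) : FH w k t = ∅ := by
  classical
  unfold FH
  rw [Finset.filter_eq_empty_iff]
  rintro B _ ⟨ht, hH⟩
  exact not_hits hk (by omega) hH

lemma trues_of_chi {B : Fin w → Bool} {t : ℕ} (h : chi B = 2 * (t : ℤ) - w) :
    trues B = t := by
  have := chi_eq_trues B
  omega

lemma mem_FH {B : Fin w → Bool} {t : ℕ} :
    B ∈ FH w k t ↔ trues B = t ∧ Hits k B := by
  classical
  unfold FH
  simp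

lemma card_FH_reflect {t : ℕ} (hk : 0 < k) (h1 : t + k ≤ w) (h2 : w < 2 * t + k) :
    (FH w k t).card = w.choose (w - k - t) := by
  classical
  have h3 : 2 * (w - k - t) + k ≤ w := by omega
  have key : ∀ B : Fin w → Bool, ∀ u v : ℕ, u + v + k = w → trues B = u → Hits k B →
      trues (reflectF k B) = v ∧ Hits k (reflectF k B) := by
    intro B u v huv htr hH
    refine ⟨trues_of_chi ?_, reflectF_hits hk hH⟩
    rw [chi_reflectF hk hH, chi_eq_trues B, htr]
    push_cast
    omega
  rw [← card_Fs w (w - k - t), ← FH_eq_Fs h3]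
  apply Finset.card_bij (fun B _ => reflectF k B)
  · intro B hB
    obtain ⟨ht, hH⟩ := mem_FH.mp hB
    exact mem_FH.mpr (key B t (w - k - t) (by omega) ht hH)
  · intro B₁ hB₁ B₂ hB₂ h
    rw [← reflectF_invol hk (mem_FH.mp hB₁).2, ← reflectF_invol hk (mem_FH.mp hB₂).2, h]
  · intro C hC
    obtain ⟨htC, hHC⟩ := mem_FH.mp hC
    exact ⟨reflectF k C, mem_FH.mpr (key C (w - k - t) t (by omega) htC hHC),
      reflectF_invol hk hHC⟩


lemma choose_le_succ_of (w i : ℕ) (h : 2 * i + 1 ≤ w) : w.choose i ≤ w.choose (i + 1) := by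
  have h1 := Nat.choose_succ_right_eq w i
  have h2 : w.choose i * (i + 1) ≤ w.choose i * (w - i) :=
    Nat.mul_le_mul_left _ (by omega)
  rw [← h1] at h2
  exact Nat.le_of_mul_le_mul_right h2 (by omega)

lemma chooseE_aux (w : ℕ) : ∀ d m j : ℕ, j - m = d → m ≤ j → m + j ≤ w →
    w.choose m ≤ w.choose j := by
  intro d
  induction d with
  | zero =>
    intro m j hd h1 _
    have : m = j := by omega
    rw [this]
  | succ d ih =>
    intro m j hd h1 h2
    have hmj : m < j := by omega
    by_cases hw : m + j = w
    · have : j = w - m := by omega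
      rw [this, Nat.choose_symm (by omega)]
    · calc w.choose m ≤ w.choose (m + 1) := choose_le_succ_of w m (by omega)
        _ ≤ w.choose j := ih (m + 1) j (by omega) (by omega) (by omega)

lemma chooseE (w m j : ℕ) (h1 : m ≤ j) (h2 : m + j ≤ w) : w.choose m ≤ w.choose j :=
  chooseE_aux w (j - m) m j rfl h1 h2

lemma choose_prod_step (w r t : ℕ) (hr : r + 1 + t + k = w) :
    w.choose r * w.choose t ≤ w.choose (r + 1) * w.choose (t + 1) := by
  have h1 := Nat.choose_succ_right_eq w r
  have h2 := Nat.choose_succ_right_eq w t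
  have hwr : w - r = t + k + 1 := by omega
  have hwt : w - t = r + k + 1 := by omega
  rw [hwr] at h1
  rw [hwt] at h2
  have key : (w.choose r * w.choose t) * ((r + 1) * (t + 1))
      ≤ (w.choose (r + 1) * w.choose (t + 1)) * ((r + 1) * (t + 1)) := by
    have e : (w.choose (r + 1) * w.choose (t + 1)) * ((r + 1) * (t + 1))
        = (w.choose (r + 1) * (r + 1)) * (w.choose (t + 1) * (t + 1)) := by ring
    rw [e, h1, h2]
    have e2 : w.choose r * (t + k + 1) * (w.choose t * (r + k + 1))
        = (w.choose r * w.choose t) * ((t + k + 1) * (r + k + 1)) := by ring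
    rw [e2]
    apply Nat.mul_le_mul_left
    calc (r + 1) * (t + 1) ≤ (t + k + 1) * (r + k + 1) := by nlinarith
      _ = (t + k + 1) * (r + k + 1) := rfl
  exact Nat.le_of_mul_le_mul_right key (by positivity)

lemma main_step {t : ℕ} (hk : 0 < k) (htw : t < w) :
    (FH w k (t + 1)).card * w.choose t ≤ (FH w k t).card * w.choose (t + 1) := by
  classical
  by_cases hA : w < t + 1 + k
  · rw [FH_empty hk hA]
    simp
  push_neg at hA
  by_cases hB : 2 * (t + 1) + k ≤ w
  · rw [FH_eq_Fs hB, FH_eq_Fs (by omega), card_Fs, card_Fs]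
    ring_nf
    exact le_refl _
  push_neg at hB
  -- now t + 1 + k ≤ w and w < 2t + 2 + k
  have hFH1 : (FH w k (t + 1)).card = w.choose (w - k - (t + 1)) :=
    card_FH_reflect hk (by omega) (by omega)
  by_cases hC : 2 * t + k ≤ w
  · rw [hFH1, FH_eq_Fs hC, card_Fs]
    have ha1 : w - k - (t + 1) ≤ t + 1 := by omega
    have ha2 : (w - k - (t + 1)) + (t + 1) ≤ w := by omega
    have hle : w.choose (w - k - (t + 1)) ≤ w.choose (t + 1) :=
      chooseE w (w - k - (t + 1)) (t + 1) ha1 ha2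
    calc w.choose (w - k - (t + 1)) * w.choose t ≤ w.choose (t + 1) * w.choose t :=
          Nat.mul_le_mul_right _ hle
      _ = w.choose t * w.choose (t + 1) := by ring
  · push_neg at hC
    have hFH0 : (FH w k t).card = w.choose (w - k - t) :=
      card_FH_reflect hk (by omega) (by omega)
    have hrr : w - k - t = (w - k - (t + 1)) + 1 := by omega
    rw [hFH1, hFH0, hrr]
    have hsum : (w - k - (t + 1)) + 1 + t + k = w := by omega
    exact choose_prod_step w (w - k - (t + 1)) t hsum

lemma main_chain {p q : ℕ} (hk : 0 < k) (hpq : p ≤ q) (hq : q ≤ w) :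
    (FH w k q).card * w.choose p ≤ (FH w k p).card * w.choose q := by
  induction q with
  | zero =>
    have : p = 0 := by omega
    rw [this]
  | succ q ih =>
    by_cases hpq' : p = q + 1
    · rw [hpq']
    have hpq2 : p ≤ q := by omega
    have ih' := ih hpq2 (by omega)
    have st := main_step hk (show q < w by omega)
    have hpos : 0 < w.choose q := Nat.choose_pos (by omega)
    have key : ((FH w k (q+1)).card * w.choose p) * w.choose q
        ≤ ((FH w k p).card * w.choose (q+1)) * w.choose q := by
      calc ((FH w k (q+1)).card * w.choose p) * w.choose q
          = ((FH w k (q+1)).card * w.choose q) * w.choose p := by ring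
        _ ≤ ((FH w k q).card * w.choose (q+1)) * w.choose p :=
            Nat.mul_le_mul_right _ st
        _ = ((FH w k q).card * w.choose p) * w.choose (q+1) := by ring
        _ ≤ ((FH w k p).card * w.choose q) * w.choose (q+1) :=
            Nat.mul_le_mul_right _ ih'
        _ = ((FH w k p).card * w.choose (q+1)) * w.choose q := by ring
    exact Nat.le_of_mul_le_mul_right key hpos


open MeasureTheory ProbabilityTheory
open scoped ENNReal

lemma uniformOn_univ_apply {α : Type*} [MeasurableSpace α] [MeasurableSingletonClass α]
    [Fintype α] (s : Set α) [DecidablePred (· ∈ s)] :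
    uniformOn (univ : Finset α) s
      = ((Fintype.card α : ℝ≥0∞))⁻¹ * ((univ.filter (· ∈ s)).card : ℝ≥0∞) := by
  unfold uniformOn
  rw [Measure.smul_apply, smul_eq_mul, Finset.card_univ]
  congr 1
  rw [Measure.coe_finset_sum, Finset.sum_apply]
  rw [Finset.sum_congr rfl fun x _ => Measure.dirac_apply x s]
  rw [Finset.sum_congr rfl (g := fun x => if x ∈ s then (1 : ℝ≥0∞) else 0)
    (fun x _ => by simp [Set.indicator_apply])]
  rw [Finset.sum_boole]

lemma ennreal_ratio_le {Ma Na Mb Nb : ℕ} (hNa : 0 < Na) (hNb : 0 < Nb)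
    (h : Mb * Na ≤ Ma * Nb) :
    ((Nb : ℝ≥0∞))⁻¹ * Mb ≤ ((Na : ℝ≥0∞))⁻¹ * Ma := by
  have hNa0 : (Na : ℝ≥0∞) ≠ 0 := by exact_mod_cast hNa.ne'
  have hNb0 : (Nb : ℝ≥0∞) ≠ 0 := by exact_mod_cast hNb.ne'
  rw [mul_comm, ← div_eq_mul_inv, mul_comm, ← div_eq_mul_inv]
  rw [ENNReal.div_le_iff_le_mul (Or.inl hNb0) (Or.inl (ENNReal.natCast_ne_top Nb))]
  have e : (Ma : ℝ≥0∞) / Na * Nb = ((Ma * Nb : ℕ) : ℝ≥0∞) / Na := by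
    rw [div_eq_mul_inv, div_eq_mul_inv]
    push_cast
    ring
  rw [e, ENNReal.le_div_iff_mul_le (Or.inl hNa0) (Or.inl (ENNReal.natCast_ne_top Na))]
  exact_mod_cast h

lemma cond_helper (c : ℝ≥0∞) (hc0 : c ≠ 0) (hct : c ≠ ∞) {Ma Na Mb Nb : ℕ}
    (hNa : 0 < Na) (hNb : 0 < Nb) (h : Mb * Na ≤ Ma * Nb) :
    (c⁻¹ * Nb)⁻¹ * (c⁻¹ * Mb) ≤ (c⁻¹ * Na)⁻¹ * (c⁻¹ * Ma) := by
  have key : ∀ M N : ℕ, (c⁻¹ * (N : ℝ≥0∞))⁻¹ * (c⁻¹ * M) = ((N : ℝ≥0∞))⁻¹ * M := by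
    intro M N
    rw [ENNReal.mul_inv (Or.inl (ENNReal.inv_ne_zero.mpr hct))
      (Or.inl (ENNReal.inv_ne_top.mpr hc0)), inv_inv]
    calc c * (N : ℝ≥0∞)⁻¹ * (c⁻¹ * M) = (c * c⁻¹) * ((N : ℝ≥0∞)⁻¹ * M) := by ring
      _ = ((N : ℝ≥0∞))⁻¹ * M := by rw [ENNReal.mul_inv_cancel hc0 hct, one_mul]
  rw [key, key]
  exact ennreal_ratio_le hNa hNb h

end Statement6Aux

open Finset

/-- For a uniformly random `B ∈ {±1}^w` and `k > 0`, conditioning on a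
smaller total sum makes the event `E^L_k = {∃ j, χ_j(B) ≤ -k}` more likely: if `a < b`
and both `{χ(B) = a}` and `{χ(B) = b}` have positive probability, then
`Pr(E^L_k | χ(B) = a) ≥ Pr(E^L_k | χ(B) = b)`. -/
theorem prefix_event_antitone (w k : ℕ) (hk : 0 < k) (a b : ℤ) (hab : a < b)
    (ha : 0 < uniformOn (Finset.univ : Finset (Fin w → Bool)) {B | chi B = a})
    (hb : 0 < uniformOn (Finset.univ : Finset (Fin w → Bool)) {B | chi B = b}) :
    ProbabilityTheory.cond (uniformOn (Finset.univ : Finset (Fin w → Bool)))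
        {B | chi B = b} {B | ∃ j : ℕ, chiPrefix B j ≤ -(k : ℤ)}
      ≤ ProbabilityTheory.cond (uniformOn (Finset.univ : Finset (Fin w → Bool)))
        {B | chi B = a} {B | ∃ j : ℕ, chiPrefix B j ≤ -(k : ℤ)} := by
  classical
  -- nonemptiness
  have hane : {B : Fin w → Bool | chi B = a}.Nonempty := by
    by_contra h
    rw [Set.not_nonempty_iff_eq_empty] at h
    rw [h] at ha
    simp at ha
  have hbne : {B : Fin w → Bool | chi B = b}.Nonempty := by
    by_contra h
    rw [Set.not_nonempty_iff_eq_empty] at h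
    rw [h] at hb
    simp at hb
  obtain ⟨Ba, hBa⟩ := hane
  obtain ⟨Bb, hBb⟩ := hbne
  rw [Set.mem_setOf_eq] at hBa hBb
  have hap : a = 2 * (trues Ba : ℤ) - w := by rw [← hBa, chi_eq_trues]
  have hbq : b = 2 * (trues Bb : ℤ) - w := by rw [← hBb, chi_eq_trues]
  have hpw := trues_le Ba
  have hqw := trues_le Bb
  have hpq : trues Ba ≤ trues Bb := by omega
  -- identify the filters
  have hSa : (univ.filter (· ∈ {B : Fin w → Bool | chi B = a})) = Fs w (trues Ba) := by
    unfold Fs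
    apply Finset.filter_congr
    intro B _
    simp only [Set.mem_setOf_eq]
    constructor
    · intro h
      exact trues_of_chi (by rw [h, hap])
    · intro h
      rw [chi_eq_trues, h, hap]
  have hSb : (univ.filter (· ∈ {B : Fin w → Bool | chi B = b})) = Fs w (trues Bb) := by
    unfold Fs
    apply Finset.filter_congr
    intro B _
    simp only [Set.mem_setOf_eq]
    constructor
    · intro h
      exact trues_of_chi (by rw [h, hbq])
    · intro h
      rw [chi_eq_trues, h, hbq]
  have hSaE : (univ.filter
      (· ∈ {B : Fin w → Bool | chi B = a} ∩ {B | ∃ j : ℕ, chiPrefix B j ≤ -(k : ℤ)}))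
      = FH w k (trues Ba) := by
    unfold FH
    apply Finset.filter_congr
    intro B _
    simp only [Set.mem_inter_iff, Set.mem_setOf_eq]
    constructor
    · rintro ⟨h1, h2⟩
      exact ⟨trues_of_chi (by rw [h1, hap]), h2⟩
    · rintro ⟨h1, h2⟩
      exact ⟨by rw [chi_eq_trues, h1, hap], h2⟩
  have hSbE : (univ.filter
      (· ∈ {B : Fin w → Bool | chi B = b} ∩ {B | ∃ j : ℕ, chiPrefix B j ≤ -(k : ℤ)}))
      = FH w k (trues Bb) := by
    unfold FH
    apply Finset.filter_congr
    intro B _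
    simp only [Set.mem_inter_iff, Set.mem_setOf_eq]
    constructor
    · rintro ⟨h1, h2⟩
      exact ⟨trues_of_chi (by rw [h1, hbq]), h2⟩
    · rintro ⟨h1, h2⟩
      exact ⟨by rw [chi_eq_trues, h1, hbq], h2⟩
  have hma : MeasurableSet {B : Fin w → Bool | chi B = a} :=
    Set.Countable.measurableSet (Set.to_countable _)
  have hmb : MeasurableSet {B : Fin w → Bool | chi B = b} :=
    Set.Countable.measurableSet (Set.to_countable _)
  rw [ProbabilityTheory.cond_apply hmb, ProbabilityTheory.cond_apply hma]
  rw [uniformOn_univ_apply, uniformOn_univ_apply, uniformOn_univ_apply, uniformOn_univ_apply]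
  rw [hSa, hSb, hSaE, hSbE, card_Fs, card_Fs]
  apply cond_helper _ (by simp [Fintype.card_pos.ne']) (by simp)
    (Nat.choose_pos hpw) (Nat.choose_pos hqw)
  exact main_chain hk hpq hqw


end Schelling
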